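/- Let n = sm. Let f, g be polynomials with coefficients in F_{2^s}, with g permuting F_{2^n}. Suppose (H1) f is differentially δ_f-uniform as a function on F_{2^s}, (H2) g is differentially δ_g-uniform on F_{2^n}, and (H3) for every a ∈ F_{2^s} \ {0} and b ∈ F_{2^s} the equation g(x)+g(x+a)=b has no solution x ∈ F_{2^n} \ F_{2^s}. Then the piecewise function F (F(x)=f(x) on F_{2^s}, F(x)=g(x) off F_{2^s}) satisfies: for every b ∈ F_{2^n}, δ_F(a,b) ≤ max{δ_f, δ_g} for all a ∈ F_{2^s} \ {0}, and δ_F(a,b) ≤ δ_g + 2 for all a ∉ F_{2^s}. -/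

import Mathlib

/-- `delta f a b` is the number of `x` with `f (x + a) + f x = b`. -/
noncomputable def delta {F : Type*} [Field F] (f : F → F) (a b : F) : ℕ :=
  Nat.card {x : F // f (x + a) + f x = b}

/-- The differential uniformity of `f` (maximum of `delta f a b` over `a ≠ 0`, `b`). -/
noncomputable def diffUnif {F : Type*} [Field F] (f : F → F) : ℕ :=
  sSup {d : ℕ | ∃ a b : F, a ≠ 0 ∧ delta f a b = d}

/-- `deltaOn S f a b` is the number of `x ∈ S` with `f (x + a) + f x = b`. -/
noncomputable def deltaOn {F : Type*} [Field F] (S : Set F) (f : F → F) (a b : F) : ℕ :=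
  Nat.card {x : F // x ∈ S ∧ f (x + a) + f x = b}

/-- The differential uniformity of `f` as a function on `S` (sup over `a ∈ S \ {0}`, `b ∈ S`). -/
noncomputable def diffUnifOn {F : Type*} [Field F] (S : Set F) (f : F → F) : ℕ :=
  sSup {d : ℕ | ∃ a ∈ S, a ≠ 0 ∧ ∃ b ∈ S, deltaOn S f a b = d}

theorem stmt1 {F : Type*} [Field F] [Fintype F] (n s m : ℕ)
    (hn : n = s * m) (hcard : Fintype.card F = 2 ^ n)
    (S : Set F) (hS : S = {x : F | x ^ (2 ^ s) = x})
    (f g : F → F) (p q : Polynomial F)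
    (hp : ∀ i, p.coeff i ∈ S) (hq : ∀ i, q.coeff i ∈ S)
    (hf : ∀ x, f x = p.eval x) (hg : ∀ x, g x = q.eval x)
    (hgperm : Function.Bijective g)
    (hH3 : ∀ a ∈ S, a ≠ 0 → ∀ b ∈ S, ∀ x, x ∉ S → g x + g (x + a) ≠ b)
    (Fn : F → F)
    (hFn1 : ∀ x ∈ S, Fn x = f x) (hFn2 : ∀ x ∉ S, Fn x = g x) :
    ∀ a b : F, a ≠ 0 →
      (a ∈ S → delta Fn a b ≤ max (diffUnifOn S f) (diffUnif g)) ∧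
      (a ∉ S → delta Fn a b ≤ diffUnif g + 2) := by
  classical
  intro a b ha
  -- characteristic 2
  have hn0 : n ≠ 0 := by
    rintro rfl
    rw [pow_zero] at hcard
    have := Fintype.one_lt_card (α := F)
    omega
  have h2 : (2 : F) = 0 := by
    have hc : ((Fintype.card F : ℕ) : F) = 0 := FiniteField.cast_card_eq_zero F
    rw [hcard] at hc
    push_cast at hc
    exact (pow_eq_zero_iff hn0).mp hc
  haveI : CharP F 2 := (CharP.charP_iff_prime_eq_zero Nat.prime_two).mpr h2
  haveI : Fact (Nat.Prime 2) := ⟨Nat.prime_two⟩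
  haveI : ExpChar F 2 := .prime Nat.prime_two
  have hxx : ∀ x : F, x + x = 0 := fun x => by linear_combination x * h2
  -- basic closure properties of S
  have h0S : (0 : F) ∈ S := by
    rw [hS]
    exact zero_pow (by positivity)
  have haddS : ∀ x ∈ S, ∀ y ∈ S, x + y ∈ S := by
    intro x hx y hy
    rw [hS] at hx hy ⊢
    have hx' : x ^ 2 ^ s = x := hx
    have hy' : y ^ 2 ^ s = y := hy
    show (x + y) ^ 2 ^ s = x + y
    rw [add_pow_char_pow, hx', hy']
  have hcomplS : ∀ x ∈ S, ∀ y : F, x + y ∈ S → y ∈ S := by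
    intro x hx y hxy
    have h : x + (x + y) = y := by linear_combination hxx x
    exact h ▸ haddS x hx (x + y) hxy
  -- evaluation of polynomials with coefficients in S stays in S
  have heval : ∀ r : Polynomial F, (∀ i, r.coeff i ∈ S) → ∀ x ∈ S, r.eval x ∈ S := by
    intro r hr x hx
    set φ : F →+* F := iterateFrobenius F 2 s with hφ
    have hx' : φ x = x := by
      rw [hS] at hx
      exact hx
    have hmap : r.map φ = r := Polynomial.ext fun i => by
      rw [Polynomial.coeff_map]
      have := hr i
      rw [hS] at this
      exact this
    have key : φ (r.eval x) = r.eval x := by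
      rw [← Polynomial.eval₂_hom, hx', ← Polynomial.eval_map, hmap]
    rw [hS]
    exact key
  have hfS : ∀ x ∈ S, f x ∈ S := fun x hx => by
    rw [hf]; exact heval p hp x hx
  -- bounds by differential uniformities
  have hdg : ∀ b' : F, delta g a b' ≤ diffUnif g := by
    intro b'
    have hbdd : BddAbove {d : ℕ | ∃ a b : F, a ≠ 0 ∧ delta g a b = d} := by
      refine ⟨Fintype.card F, ?_⟩
      rintro d ⟨a', b', -, rfl⟩
      have h1 : delta g a' b' ≤ Nat.card F :=
        Nat.card_le_card_of_injective (fun y => y.1) Subtype.val_injective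
      simpa [Nat.card_eq_fintype_card] using h1
    exact le_csSup hbdd ⟨a, b', ha, rfl⟩
  have hdf : a ∈ S → b ∈ S → deltaOn S f a b ≤ diffUnifOn S f := by
    intro haS hbS
    have hbdd : BddAbove {d : ℕ | ∃ a ∈ S, a ≠ 0 ∧ ∃ b ∈ S, deltaOn S f a b = d} := by
      refine ⟨Fintype.card F, ?_⟩
      rintro d ⟨a', -, -, b', -, rfl⟩
      have h1 : deltaOn S f a' b' ≤ Nat.card F :=
        Nat.card_le_card_of_injective (fun y => y.1) Subtype.val_injective
      simpa [Nat.card_eq_fintype_card] using h1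
    exact le_csSup hbdd ⟨a, haS, ha, b, hbS, rfl⟩
  have hdelta : ∀ (h : F → F) (a' b' : F),
      delta h a' b' = Set.ncard {x : F | h (x + a') + h x = b'} :=
    fun h a' b' => Nat.card_coe_set_eq _
  constructor
  · -- Case a ∈ S
    intro haS
    by_cases hbS : b ∈ S
    · have heq : delta Fn a b = deltaOn S f a b := by
        apply Nat.card_congr
        apply Equiv.subtypeEquivRight
        intro x
        constructor
        · intro hx
          by_cases hxS : x ∈ S
          · have hxa : x + a ∈ S := haddS x hxS a haS
            refine ⟨hxS, ?_⟩
            rw [← hFn1 _ hxa, ← hFn1 _ hxS]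
            exact hx
          · exfalso
            have hxa : x + a ∉ S := fun h => hxS (by
              have := hcomplS a haS x (by rwa [add_comm] at h)
              exact this)
            have hgx : g (x + a) + g x = b := by
              rw [← hFn2 _ hxa, ← hFn2 _ hxS]
              exact hx
            exact hH3 a haS ha b hbS x hxS (by linear_combination hgx)
        · rintro ⟨hxS, hx⟩
          have hxa : x + a ∈ S := haddS x hxS a haS
          rw [hFn1 _ hxa, hFn1 _ hxS]
          exact hx
      rw [heq]
      exact le_trans (hdf haS hbS) (le_max_left _ _)
    · -- b ∉ S : all solutions are outside S
      have hle : delta Fn a b ≤ delta g a b := by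
        apply Nat.card_le_card_of_injective
          (f := fun y : {x : F // Fn (x + a) + Fn x = b} =>
            (⟨y.1, by
              obtain ⟨x, hx⟩ := y
              by_cases hxS : x ∈ S
              · exfalso
                have hxa : x + a ∈ S := haddS x hxS a haS
                have hfx : f (x + a) + f x = b := by
                  rw [← hFn1 _ hxa, ← hFn1 _ hxS]
                  exact hx
                exact hbS (hfx ▸ haddS _ (hfS _ hxa) _ (hfS _ hxS))
              · have hxa : x + a ∉ S := fun h => hxS
                  (hcomplS a haS x (by rwa [add_comm] at h))
                show g (x + a) + g x = b
                rw [← hFn2 _ hxa, ← hFn2 _ hxS]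
                exact hx⟩ : {x : F // g (x + a) + g x = b}))
        intro y z hyz
        have h5 := congrArg Subtype.val hyz
        exact Subtype.ext h5
      exact le_trans hle (le_trans (hdg b) (le_max_right _ _))
  · -- Case a ∉ S
    intro haS
    have hsub : {x : F | Fn (x + a) + Fn x = b} ⊆
        {x : F | x ∈ S ∧ Fn (x + a) + Fn x = b} ∪
        {x : F | x + a ∈ S ∧ Fn (x + a) + Fn x = b} ∪
        {x : F | x ∉ S ∧ x + a ∉ S ∧ Fn (x + a) + Fn x = b} := by
      intro x hx
      by_cases h1 : x ∈ S
      · exact Or.inl (Or.inl ⟨h1, hx⟩)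
      by_cases h2 : x + a ∈ S
      · exact Or.inl (Or.inr ⟨h2, hx⟩)
      · exact Or.inr ⟨h1, h2, hx⟩
    have hAcard : ({x : F | x ∈ S ∧ Fn (x + a) + Fn x = b}).ncard ≤ 1 := by
      rw [Set.ncard_le_one (Set.toFinite _)]
      rintro x ⟨hxS, hxeq⟩ y ⟨hyS, hyeq⟩
      have hxa : x + a ∉ S := fun h => haS (hcomplS x hxS a h)
      have hya : y + a ∉ S := fun h => haS (hcomplS y hyS a h)
      rw [hFn2 _ hxa, hFn1 _ hxS] at hxeq
      rw [hFn2 _ hya, hFn1 _ hyS] at hyeq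
      by_contra hne
      have hxy0 : x + y ≠ 0 := fun h => hne (by linear_combination h - hxx y)
      have hxyS : x + y ∈ S := haddS x hxS y hyS
      have hfxyS : f x + f y ∈ S := haddS _ (hfS x hxS) _ (hfS y hyS)
      have key : g (y + a) + g (y + a + (x + y)) = f x + f y := by
        have h3 : y + a + (x + y) = x + a := by linear_combination hxx y
        rw [h3]
        linear_combination hyeq + hxeq + (b - f x - f y) * h2
      exact hH3 (x + y) hxyS hxy0 (f x + f y) hfxyS (y + a) hya key
    have hBcard : ({x : F | x + a ∈ S ∧ Fn (x + a) + Fn x = b}).ncard ≤ 1 := by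
      rw [Set.ncard_le_one (Set.toFinite _)]
      rintro x ⟨hxaS, hxeq⟩ y ⟨hyaS, hyeq⟩
      have hxS : x ∉ S := fun h => haS (hcomplS x h a hxaS)
      have hyS : y ∉ S := fun h => haS (hcomplS y h a hyaS)
      rw [hFn1 _ hxaS, hFn2 _ hxS] at hxeq
      rw [hFn1 _ hyaS, hFn2 _ hyS] at hyeq
      by_contra hne
      have hxy0 : x + y ≠ 0 := fun h => hne (by linear_combination h - hxx y)
      have hxyS : x + y ∈ S := by
        have h4 : x + a + (y + a) = x + y := by linear_combination hxx a
        exact h4 ▸ haddS _ hxaS _ hyaS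
      have hfxyS : f (x + a) + f (y + a) ∈ S :=
        haddS _ (hfS _ hxaS) _ (hfS _ hyaS)
      have key : g y + g (y + (x + y)) = f (x + a) + f (y + a) := by
        have h3 : y + (x + y) = x := by linear_combination hxx y
        rw [h3]
        linear_combination hyeq + hxeq + (b - f (x + a) - f (y + a)) * h2
      exact hH3 (x + y) hxyS hxy0 (f (x + a) + f (y + a)) hfxyS y hyS key
    have hCcard : ({x : F | x ∉ S ∧ x + a ∉ S ∧ Fn (x + a) + Fn x = b}).ncard
        ≤ delta g a b := by
      rw [hdelta g a b]
      apply Set.ncard_le_ncard _ (Set.toFinite _)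
      rintro x ⟨h1, h2', h3⟩
      rw [hFn2 _ h2', hFn2 _ h1] at h3
      exact h3
    have hchain : delta Fn a b ≤
        ({x : F | x ∈ S ∧ Fn (x + a) + Fn x = b}).ncard +
        ({x : F | x + a ∈ S ∧ Fn (x + a) + Fn x = b}).ncard +
        ({x : F | x ∉ S ∧ x + a ∉ S ∧ Fn (x + a) + Fn x = b}).ncard := by
      rw [hdelta Fn a b]
      refine le_trans (Set.ncard_le_ncard hsub (Set.toFinite _)) ?_
      refine le_trans (Set.ncard_union_le _ _) ?_
      exact add_le_add_left (Set.ncard_union_le _ _) _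
    have hfin := hdg b
    omega
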